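/- Let κ be inaccessible, λ < κ uncountable, and f : κ → κ. Define, for α < κ, J_f^α = {η ∈ J_f : rang(η) ⊂ λ × β^4 for some β < α}, where J_f is the coloured tree of Definition 2.6. Then the family (J_f^α)_{α<κ} is a filtration of J_f: each J_f^α is downward closed, the union over α < κ is J_f, the family is increasing, continuous at limit ordinals, and each J_f^α has cardinality less than κ. -/

import Mathlib

open Cardinal Set

/-- A 5-tuple of ordinals, the value of a node of `J_f` at a point of its domain. -/
abbrev Tup5 := Ordinal.{0} × Ordinal.{0} × Ordinal.{0} × Ordinal.{0} × Ordinal.{0}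

/-- Nodes of `J_f`: partial functions `η : s → λ × κ⁴` (`s ≤ λ`), coded as
`Option`-valued functions on ordinals. -/
abbrev Node := Ordinal.{0} → Option Tup5

/-- A good node: its domain is an initial segment `Iio s` with `s ≤ λ`, its first
coordinate takes values below `λ` and the remaining four below `κ`. -/
def IsGoodNode (κ lam : Cardinal.{0}) (η : Node) : Prop :=
  (∃ s ≤ lam.ord, ∀ i, (η i).isSome = true ↔ i < s) ∧
  ∀ i v, η i = some v → v.1 < lam.ord ∧ v.2.1 < κ.ord ∧ v.2.2.1 < κ.ord ∧
    v.2.2.2.1 < κ.ord ∧ v.2.2.2.2 < κ.ord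

/-- Restriction `η ↾ s` of a node. -/
noncomputable def restrictNode (η : Node) (s : Ordinal) : Node := fun i => if i < s then η i else none

/-- `J_f^α = {η ∈ J_f | rang(η) ⊂ λ × β⁴ for some β < α}`. -/
def levelSet (J : Set Node) (α : Ordinal) : Set Node :=
  {η ∈ J | ∃ β < α, ∀ i v, η i = some v →
    v.2.1 < β ∧ v.2.2.1 < β ∧ v.2.2.2.1 < β ∧ v.2.2.2.2 < β}

/-- for `κ` inaccessible, `λ < κ` uncountable, and any tree `J` of
nodes as in Definition 2.6 (a set of good nodes closed under restriction), the
family `(J^α)_{α<κ}` is a filtration of `J`: each `J^α` is downward closed, the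
union over `α < κ` is `J`, the family is increasing and continuous at limits,
and each `J^α` has cardinality `< κ`. -/
theorem stmt7 (κ lam : Cardinal.{0}) (hκ : κ.IsInaccessible) (h0 : ℵ₀ < lam)
    (hlt : lam < κ)
    (J : Set Node) (hJ : ∀ η ∈ J, IsGoodNode κ lam η)
    (hclosed : ∀ η ∈ J, ∀ s, restrictNode η s ∈ J) :
    (∀ α, ∀ η ∈ levelSet J α, ∀ s, restrictNode η s ∈ levelSet J α) ∧
    (⋃ α ∈ Set.Iio κ.ord, levelSet J α) = J ∧
    (∀ α β, α ≤ β → levelSet J α ⊆ levelSet J β) ∧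
    (∀ α, Order.IsSuccLimit α → levelSet J α = ⋃ β ∈ Set.Iio α, levelSet J β) ∧
    (∀ α < κ.ord, Cardinal.mk ↥(levelSet J α) < Cardinal.lift.{1,0} κ) := by
  obtain ⟨hℵκ, hreg, hsl⟩ := hκ
  have hmono : ∀ α β, α ≤ β → levelSet J α ⊆ levelSet J β := by
    intro α β hab η hη
    obtain ⟨h1, γ, hγ, h2⟩ := hη
    exact ⟨h1, γ, hγ.trans_le hab, h2⟩
  have hlim := Cardinal.isSuccLimit_ord hℵκ.le
  refine ⟨?_, ?_, hmono, ?_, ?_⟩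
  · -- downward closed
    intro α η hη s
    obtain ⟨h1, β, hβ, h2⟩ := hη
    refine ⟨hclosed η h1 s, β, hβ, ?_⟩
    intro i v hv
    apply h2 i v
    unfold restrictNode at hv
    by_cases h : i < s
    · simpa [h] using hv
    · simp [h] at hv
  · -- union is J
    ext η
    simp only [mem_iUnion, mem_Iio, exists_prop]
    constructor
    · rintro ⟨α, _, h1, _⟩; exact h1
    · intro hη
      obtain ⟨⟨s, hs, hdom⟩, hbound⟩ := hJ η hη
      set e := (Ordinal.ToType.mk (o := lam.ord)) with he
      set f : lam.ord.ToType → Ordinal :=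
        fun i => ((η ((e.symm i : Iio lam.ord) : Ordinal)).elim 0
          (fun v => v.2.1 ⊔ v.2.2.1 ⊔ v.2.2.2.1 ⊔ v.2.2.2.2)) with hf
      have hκ0 : (0 : Ordinal) < κ.ord := hlim.pos
      have hflt : ∀ i, f i < κ.ord := by
        intro i
        rcases hv : η ((e.symm i : Iio lam.ord) : Ordinal) with _ | v
        · simpa [hf, hv] using hκ0
        · have hb := hbound _ v hv
          simp only [hf, hv, Option.elim_some]
          exact max_lt (max_lt (max_lt hb.2.1 hb.2.2.1) hb.2.2.2.1) hb.2.2.2.2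
      have hsup : iSup f < κ.ord := by
        apply Cardinal.iSup_lt_ord_of_isRegular ⟨hℵκ.le, hreg⟩ ?_ hflt
        rw [Cardinal.mk_toType, Cardinal.card_ord]
        exact hlt
      refine ⟨iSup f + 1 + 1, ?_, hη, iSup f + 1, ?_, ?_⟩
      · rw [Ordinal.add_one_eq_succ, Ordinal.add_one_eq_succ]
        exact hlim.succ_lt (hlim.succ_lt hsup)
      · rw [Ordinal.add_one_eq_succ]; exact Order.lt_succ _
      · intro i v hv
        have hi : i < lam.ord := by
          have := (hdom i).1 (by simp [hv])
          exact this.trans_le hs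
        have hfi : f (e ⟨i, hi⟩) = v.2.1 ⊔ v.2.2.1 ⊔ v.2.2.2.1 ⊔ v.2.2.2.2 := by
          simp [hf, hv]
        have hle : v.2.1 ⊔ v.2.2.1 ⊔ v.2.2.2.1 ⊔ v.2.2.2.2 ≤ iSup f := by
          rw [← hfi]; exact Ordinal.le_iSup f _
        have hsucc : iSup f < iSup f + 1 := by
          rw [Ordinal.add_one_eq_succ]; exact Order.lt_succ _
        refine ⟨?_, ?_, ?_, ?_⟩
        · exact (((le_sup_left.trans le_sup_left).trans le_sup_left).trans hle).trans_lt hsucc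
        · exact (((le_sup_right.trans le_sup_left).trans le_sup_left).trans hle).trans_lt hsucc
        · exact ((le_sup_right.trans le_sup_left).trans hle).trans_lt hsucc
        · exact (le_sup_right.trans hle).trans_lt hsucc
  · -- continuity at limits
    intro α hα
    ext η
    simp only [mem_iUnion, mem_Iio, exists_prop]
    constructor
    · rintro ⟨h1, β, hβ, h2⟩
      refine ⟨β + 1, ?_, h1, β, ?_, h2⟩
      · rw [Ordinal.add_one_eq_succ]; exact hα.succ_lt hβ
      · rw [Ordinal.add_one_eq_succ]; exact Order.lt_succ _
    · rintro ⟨β, hβ, hη⟩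
      exact hmono β α hβ.le hη
  · -- cardinality bound
    intro α hα
    set γ := lam.ord ⊔ α with hγdef
    have hlamord : lam.ord < κ.ord := Cardinal.ord_lt_ord.2 hlt
    have hγκ : γ < κ.ord := max_lt hlamord hα
    have hγ0 : (0 : Ordinal) < γ := by
      have : (0 : Ordinal) < lam.ord := by
        rw [Cardinal.lt_ord]; simpa using (aleph0_pos.trans h0)
      exact this.trans_le le_sup_left
    set z : ↥(Iio γ) := ⟨0, hγ0⟩ with hz
    set emb : Tup5 → ↥(Iio γ) × ↥(Iio γ) × ↥(Iio γ) × ↥(Iio γ) × ↥(Iio γ) := fun v =>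
      if h : v.1 < γ ∧ v.2.1 < γ ∧ v.2.2.1 < γ ∧ v.2.2.2.1 < γ ∧ v.2.2.2.2 < γ then
        (⟨v.1, h.1⟩, ⟨v.2.1, h.2.1⟩, ⟨v.2.2.1, h.2.2.1⟩, ⟨v.2.2.2.1, h.2.2.2.1⟩,
          ⟨v.2.2.2.2, h.2.2.2.2⟩)
      else (z, z, z, z, z) with hemb
    have key : ∀ η ∈ levelSet J α, ∀ i v, η i = some v →
        v.1 < γ ∧ v.2.1 < γ ∧ v.2.2.1 < γ ∧ v.2.2.2.1 < γ ∧ v.2.2.2.2 < γ := by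
      intro η hη i v hv
      obtain ⟨h1, β, hβ, h2⟩ := hη
      have hg := (hJ η h1).2 i v hv
      have hb := h2 i v hv
      exact ⟨hg.1.trans_le le_sup_left, ((hb.1.trans hβ).trans_le le_sup_right),
        ((hb.2.1.trans hβ).trans_le le_sup_right), ((hb.2.2.1.trans hβ).trans_le le_sup_right),
        ((hb.2.2.2.trans hβ).trans_le le_sup_right)⟩
    set F : ↥(levelSet J α) →
        (↥(Iio lam.ord) → Option (↥(Iio γ) × ↥(Iio γ) × ↥(Iio γ) × ↥(Iio γ) × ↥(Iio γ))) :=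
      fun η i => (η.1 i.1).map emb with hF
    have hFinj : Function.Injective F := by
      intro η η' h
      apply Subtype.ext
      funext i
      by_cases hi : i < lam.ord
      · have hcong := congrFun h ⟨i, hi⟩
        simp only [hF] at hcong
        rcases h1 : η.1 i with _ | v <;> rcases h2 : η'.1 i with _ | v'
        · rfl
        · rw [h1, h2] at hcong; simp at hcong
        · rw [h1, h2] at hcong; simp at hcong
        · rw [h1, h2] at hcong
          simp only [Option.map_some] at hcong
          have c1 := key _ η.2 i v h1
          have c2 := key _ η'.2 i v' h2
          rw [hemb] at hcong
          simp only [dif_pos c1, dif_pos c2] at hcong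
          obtain ⟨a, b, c, d, ee⟩ := v
          obtain ⟨a', b', c', d', e'⟩ := v'
          simp_all
          exact ⟨congrArg Subtype.val hcong.1, congrArg Subtype.val hcong.2.1,
            congrArg Subtype.val hcong.2.2.1, congrArg Subtype.val hcong.2.2.2.1,
            congrArg Subtype.val hcong.2.2.2.2⟩
      · obtain ⟨s, hs, hdom⟩ := (hJ _ η.2.1).1
        obtain ⟨s', hs', hdom'⟩ := (hJ _ η'.2.1).1
        have e1 : η.1 i = none := by
          rw [← Option.not_isSome_iff_eq_none, hdom]
          exact fun h' => hi (h'.trans_le hs)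
        have e2 : η'.1 i = none := by
          rw [← Option.not_isSome_iff_eq_none, hdom']
          exact fun h' => hi (h'.trans_le hs')
        rw [e1, e2]
    set μ := γ.card with hμ
    have hμκ : μ < κ := Cardinal.lt_ord.1 hγκ
    have hlamμ : lam ≤ μ := by
      have := Ordinal.card_le_card (le_sup_left : lam.ord ≤ γ)
      rwa [Cardinal.card_ord] at this
    have hμinf : ℵ₀ ≤ μ := h0.le.trans hlamμ
    have hlinf : ℵ₀ ≤ Cardinal.lift.{1} μ := by
      rw [← Cardinal.lift_aleph0.{1,0}]; exact Cardinal.lift_le.2 hμinf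
    have hIio : #(↥(Iio γ)) = Cardinal.lift.{1} μ := Ordinal.mk_Iio_ordinal γ
    have hQ : #(↥(Iio γ) × ↥(Iio γ) × ↥(Iio γ) × ↥(Iio γ) × ↥(Iio γ))
        = Cardinal.lift.{1} μ := by
      simp only [Cardinal.mk_prod, Cardinal.lift_id, hIio]
      rw [Cardinal.mul_eq_self hlinf, Cardinal.mul_eq_self hlinf, Cardinal.mul_eq_self hlinf,
        Cardinal.mul_eq_self hlinf]
    have hOpt : #(Option (↥(Iio γ) × ↥(Iio γ) × ↥(Iio γ) × ↥(Iio γ) × ↥(Iio γ)))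
        = Cardinal.lift.{1} μ := by
      rw [Cardinal.mk_option, hQ, Cardinal.add_one_eq hlinf]
    have harrow : #(↥(Iio lam.ord) → Option (↥(Iio γ) × ↥(Iio γ) × ↥(Iio γ) × ↥(Iio γ) × ↥(Iio γ)))
        = Cardinal.lift.{1} (μ ^ lam) := by
      rw [← Cardinal.power_def, hOpt, Ordinal.mk_Iio_ordinal, Cardinal.card_ord,
        Cardinal.lift_power]
    have hpow : μ ^ lam < κ := by
      calc μ ^ lam ≤ (2 ^ μ) ^ lam := Cardinal.power_le_power_right (Cardinal.cantor μ).le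
        _ = 2 ^ (μ * lam) := (Cardinal.power_mul).symm
        _ = 2 ^ μ := by rw [Cardinal.mul_eq_max hμinf h0.le, max_eq_left hlamμ]
        _ < κ := hsl hμκ
    calc #(↥(levelSet J α)) ≤ Cardinal.lift.{1} (μ ^ lam) := by
          rw [← harrow]; exact Cardinal.mk_le_of_injective hFinj
      _ < Cardinal.lift.{1,0} κ := Cardinal.lift_lt.2 hpow
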